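/- Fix ρ ∈ (0,1). Let Γ and π be Borel probability measures on ℝ^d with ∫ ‖X‖ dΓ(X) < ∞ and ∫ ‖Λ‖ dπ(Λ) < ∞, let g: ℝ^d × ℝ^d → [0,1] be measurable, and suppose π is an invariant probability measure for the kernel P_g. Let C := { x ↦ ∫ g(Λ, x) dμ(Λ) : μ a Borel probability measure on ℝ^d } and define Φ on C by Φ(r) := ∫ (r(X) − ρ)·X dΓ(X). If (A) Φ is injective on C, and (B) the constant function x ↦ ρ belongs to C, then ∫ g(Λ, x) dπ(Λ) = ρ for every x ∈ ℝ^d. -/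

import Mathlib

open MeasureTheory ProbabilityTheory Filter Set
open scoped ENNReal RealInnerProductSpace

noncomputable section

/-- `ℝ^d` with the Euclidean norm. -/
abbrev Ed (d : ℕ) : Type := EuclideanSpace ℝ (Fin d)

/-- Action of the CAR transition kernel `P_g` on a function `h`:
`(P_g h)(Λ) = ∫ [ g(Λ,X)·h(Λ + (1−ρ)X) + (1−g(Λ,X))·h(Λ − ρX) ] dΓ(X)`. -/
def kernelOp (d : ℕ) (ρ : ℝ) (Γ : Measure (Ed d)) (g : Ed d → Ed d → ℝ)
    (h : Ed d → ℝ) (Λ : Ed d) : ℝ :=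
  ∫ X, g Λ X * h (Λ + (1 - ρ) • X) + (1 - g Λ X) * h (Λ - ρ • X) ∂Γ

/-- `W_Γ`: the linear span of the topological support of `Γ` (the set of points all of
whose open neighbourhoods have positive measure). -/
def suppSpan (d : ℕ) (Γ : Measure (Ed d)) : Submodule ℝ (Ed d) :=
  Submodule.span ℝ {x : Ed d | ∀ U : Set (Ed d), IsOpen U → x ∈ U → 0 < Γ U}

/-- The `(M,Δ)`-negative feedback condition for an allocation function `g`. -/
def NegFeedback (d : ℕ) (ρ M Δ : ℝ) (Γ : Measure (Ed d)) (g : Ed d → Ed d → ℝ) : Prop :=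
  ∀ Λ : Ed d, Λ ∈ suppSpan d Γ → M ≤ ‖Λ‖ →
    (∫ X, (g Λ X - ρ) * (⟪X, Λ⟫ / ‖Λ‖) ∂Γ) ≤ -Δ

/-- `Γ` is sub-exponential: `∫ exp(λ‖X‖) dΓ(X) < ∞` for some `λ > 0`. -/
def SubExp (d : ℕ) (Γ : Measure (Ed d)) : Prop :=
  ∃ l : ℝ, 0 < l ∧ Integrable (fun x => Real.exp (l * ‖x‖)) Γ

/-- `π` is an invariant probability measure for the kernel `P_g`:
`π(A) = ∫ P_g(Λ, A) dπ(Λ)` for every Borel set `A`. -/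
def IsInvariantMeasure (d : ℕ) (ρ : ℝ) (Γ : Measure (Ed d)) (g : Ed d → Ed d → ℝ)
    (π : Measure (Ed d)) : Prop :=
  ∀ A : Set (Ed d), MeasurableSet A →
    (π A).toReal = ∫ Λ, kernelOp d ρ Γ g (A.indicator fun _ => (1 : ℝ)) Λ ∂π

open scoped NNReal in
lemma int_map_wd {α β E : Type*} [MeasurableSpace α] [MeasurableSpace β]
    [NormedAddCommGroup E] [NormedSpace ℝ E]
    (σ : Measure α) (T : α → β) (hT : Measurable T)
    (w : α → ℝ) (hw : Measurable w) (hw0 : ∀ a, 0 ≤ w a)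
    (f : β → E)
    (hf : AEStronglyMeasurable f
      (Measure.map T (σ.withDensity fun a => ENNReal.ofReal (w a)))) :
    ∫ b, f b ∂(Measure.map T (σ.withDensity fun a => ENNReal.ofReal (w a)))
      = ∫ a, w a • f (T a) ∂σ := by
  rw [integral_map hT.aemeasurable hf]
  have h1 : (fun a => ENNReal.ofReal (w a))
      = fun a => (((fun a => (w a).toNNReal) a : ℝ≥0) : ℝ≥0∞) := rfl
  rw [h1, integral_withDensity_eq_integral_smul
    (show Measurable (fun a => (w a).toNNReal) from measurable_real_toNNReal.comp hw)]
  congr 1; funext a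
  rw [NNReal.smul_def, Real.coe_toNNReal _ (hw0 a)]


set_option maxHeartbeats 2000000 in
/-- If `Φ(r) = ∫ (r(X) − ρ)·X dΓ(X)` is injective on the convex hull
`C = { x ↦ ∫ g(Λ,x) dμ(Λ) }` of the allocation functions and the constant function `ρ`
belongs to `C`, then the actual targeted allocation ratio under any invariant probability
measure `π` of `P_g` equals `ρ` everywhere. -/
theorem stmt8 (d : ℕ) (ρ : ℝ) (hρ : ρ ∈ Set.Ioo (0 : ℝ) 1)
    (Γ : Measure (Ed d)) [IsProbabilityMeasure Γ]
    (hΓmom : Integrable (fun x : Ed d => ‖x‖) Γ)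
    (π : Measure (Ed d)) [IsProbabilityMeasure π]
    (hπmom : Integrable (fun Λ : Ed d => ‖Λ‖) π)
    (g : Ed d → Ed d → ℝ) (hg_meas : Measurable (Function.uncurry g))
    (hg_range : ∀ Λ X, g Λ X ∈ Set.Icc (0 : ℝ) 1)
    (hπinv : IsInvariantMeasure d ρ Γ g π)
    (C : Set (Ed d → ℝ))
    (hC : C = {r : Ed d → ℝ | ∃ μ : Measure (Ed d), IsProbabilityMeasure μ ∧
      ∀ x, r x = ∫ Λ, g Λ x ∂μ})
    (hinj : ∀ r₁ ∈ C, ∀ r₂ ∈ C,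
      (∫ X, (r₁ X - ρ) • X ∂Γ) = (∫ X, (r₂ X - ρ) • X ∂Γ) → r₁ = r₂)
    (hconst : (fun _ : Ed d => ρ) ∈ C) :
    ∀ x : Ed d, (∫ Λ, g Λ x ∂π) = ρ := by
  classical
  set σ : Measure (Ed d × Ed d) := π.prod Γ with hσdef
  set T₁ : Ed d × Ed d → Ed d := fun p => p.1 + (1 - ρ) • p.2 with hT₁def
  set T₂ : Ed d × Ed d → Ed d := fun p => p.1 - ρ • p.2 with hT₂def
  have hT₁ : Measurable T₁ := by
    rw [hT₁def]; fun_prop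
  have hT₂ : Measurable T₂ := by
    rw [hT₂def]; fun_prop
  have h1meas : Measurable (fun p : Ed d × Ed d => g p.1 p.2) := hg_meas
  have h2meas : Measurable (fun p : Ed d × Ed d => 1 - g p.1 p.2) :=
    measurable_const.sub h1meas
  have hg0 : ∀ p : Ed d × Ed d, 0 ≤ g p.1 p.2 := fun p => (hg_range p.1 p.2).1
  have hg1 : ∀ p : Ed d × Ed d, 0 ≤ 1 - g p.1 p.2 := fun p => by
    have := (hg_range p.1 p.2).2; linarith
  set μ₁ : Measure (Ed d) :=
    Measure.map T₁ (σ.withDensity fun p => ENNReal.ofReal (g p.1 p.2)) with hμ₁def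
  set μ₂ : Measure (Ed d) :=
    Measure.map T₂ (σ.withDensity fun p => ENNReal.ofReal (1 - g p.1 p.2)) with hμ₂def
  -- finiteness of μ₁, μ₂
  have hwd_le : ∀ (w : Ed d × Ed d → ℝ), (∀ p, w p ≤ 1) →
      (σ.withDensity fun p => ENNReal.ofReal (w p)) ≤ σ := by
    intro w hw
    have : (σ.withDensity fun p => ENNReal.ofReal (w p)) ≤ σ.withDensity 1 := by
      apply withDensity_mono
      filter_upwards with p
      simpa using ENNReal.ofReal_le_one.mpr (hw p)
    simpa [withDensity_one] using this
  have hμ₁fin : μ₁ Set.univ ≠ ∞ := by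
    rw [hμ₁def, Measure.map_apply hT₁ MeasurableSet.univ]
    exact ne_top_of_le_ne_top (measure_ne_top σ _)
      (Measure.le_iff'.mp (hwd_le (fun p => g p.1 p.2) (fun p => (hg_range p.1 p.2).2)) _)
  have hμ₂fin : μ₂ Set.univ ≠ ∞ := by
    rw [hμ₂def, Measure.map_apply hT₂ MeasurableSet.univ]
    exact ne_top_of_le_ne_top (measure_ne_top σ _)
      (Measure.le_iff'.mp (hwd_le (fun p => 1 - g p.1 p.2)
        (fun p => by beta_reduce; have := (hg_range p.1 p.2).1; linarith)) _)
  have hμ₁A : ∀ A : Set (Ed d), μ₁ A ≠ ∞ := fun A =>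
    ne_top_of_le_ne_top hμ₁fin (measure_mono (Set.subset_univ A))
  have hμ₂A : ∀ A : Set (Ed d), μ₂ A ≠ ∞ := fun A =>
    ne_top_of_le_ne_top hμ₂fin (measure_mono (Set.subset_univ A))
  -- the key identity: π = μ₁ + μ₂
  have hπeq : π = μ₁ + μ₂ := by
    ext A hA
    have hind : ∀ b : Ed d, A.indicator (fun _ => (1:ℝ)) b ∈ Set.Icc (0:ℝ) 1 := by
      intro b; by_cases hb : b ∈ A <;> simp [Set.indicator, hb]
    have hindmeas : Measurable (A.indicator fun _ : Ed d => (1:ℝ)) :=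
      measurable_const.indicator hA
    have e₁ : (μ₁ A).toReal
        = ∫ a, g a.1 a.2 * A.indicator (fun _ => (1:ℝ)) (T₁ a) ∂σ := by
      have h := int_map_wd σ T₁ hT₁ (fun p => g p.1 p.2) h1meas hg0
        (A.indicator fun _ => (1:ℝ)) hindmeas.aestronglyMeasurable
      have h2 : ∫ b, A.indicator (fun _ => (1:ℝ)) b ∂μ₁ = (μ₁ A).toReal := by
        rw [integral_indicator_const (1:ℝ) hA]; simp [measureReal_def]
      rw [← h2, hμ₁def]
      rw [h]; simp [smul_eq_mul]
    have e₂ : (μ₂ A).toReal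
        = ∫ a, (1 - g a.1 a.2) * A.indicator (fun _ => (1:ℝ)) (T₂ a) ∂σ := by
      have h := int_map_wd σ T₂ hT₂ (fun p => 1 - g p.1 p.2) h2meas hg1
        (A.indicator fun _ => (1:ℝ)) hindmeas.aestronglyMeasurable
      have h2 : ∫ b, A.indicator (fun _ => (1:ℝ)) b ∂μ₂ = (μ₂ A).toReal := by
        rw [integral_indicator_const (1:ℝ) hA]; simp [measureReal_def]
      rw [← h2, hμ₂def]
      rw [h]; simp [smul_eq_mul]
    -- the invariant identity in double-integral form
    have hf1 : Integrable (fun a : Ed d × Ed d =>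
        g a.1 a.2 * A.indicator (fun _ => (1:ℝ)) (T₁ a)) σ := by
      refine Integrable.mono' (integrable_const 1)
        ((h1meas.mul (hindmeas.comp hT₁)).aestronglyMeasurable) ?_
      filter_upwards with a
      have h1 := hg_range a.1 a.2
      have h2 := hind (T₁ a)
      rw [Real.norm_eq_abs, abs_le]
      constructor <;> nlinarith [h1.1, h1.2, h2.1, h2.2]
    have hf2 : Integrable (fun a : Ed d × Ed d =>
        (1 - g a.1 a.2) * A.indicator (fun _ => (1:ℝ)) (T₂ a)) σ := by
      refine Integrable.mono' (integrable_const 1)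
        ((h2meas.mul (hindmeas.comp hT₂)).aestronglyMeasurable) ?_
      filter_upwards with a
      have h1 := hg_range a.1 a.2
      have h2 := hind (T₂ a)
      rw [Real.norm_eq_abs, abs_le]
      constructor <;> nlinarith [h1.1, h1.2, h2.1, h2.2]
    have hF : Integrable (fun a : Ed d × Ed d =>
        g a.1 a.2 * A.indicator (fun _ => (1:ℝ)) (T₁ a)
        + (1 - g a.1 a.2) * A.indicator (fun _ => (1:ℝ)) (T₂ a)) σ := hf1.add hf2
    have hdouble : (π A).toReal = ∫ a, (g a.1 a.2 * A.indicator (fun _ => (1:ℝ)) (T₁ a)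
        + (1 - g a.1 a.2) * A.indicator (fun _ => (1:ℝ)) (T₂ a)) ∂σ := by
      rw [hπinv A hA, hσdef, integral_prod _ (hσdef ▸ hF)]
      rfl
    have hkey : (π A).toReal = (μ₁ A).toReal + (μ₂ A).toReal := by
      rw [hdouble, integral_add hf1 hf2, e₁, e₂]
    have hsum_ne : (μ₁ + μ₂) A ≠ ⊤ := by
      rw [Measure.add_apply]; exact ENNReal.add_ne_top.mpr ⟨hμ₁A A, hμ₂A A⟩
    have hkey2 : (π A).toReal = ((μ₁ + μ₂) A).toReal := by
      rw [Measure.add_apply, ENNReal.toReal_add (hμ₁A A) (hμ₂A A)]; exact hkey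
    exact (ENNReal.toReal_eq_toReal_iff' (measure_ne_top π A) hsum_ne).mp hkey2
  -- integrability facts on σ
  have hnorm1 : Integrable (fun z : Ed d × Ed d => ‖z.1‖) σ := by
    have := hπmom.mul_prod (integrable_const (1:ℝ)) (ν := Γ)
    simpa [hσdef] using this
  have hnorm2 : Integrable (fun z : Ed d × Ed d => ‖z.2‖) σ := by
    have := (integrable_const (1:ℝ)).mul_prod hΓmom (μ := π)
    simpa [hσdef] using this
  have hdom : Integrable (fun z : Ed d × Ed d => ‖z.1‖ + ‖z.2‖) σ := hnorm1.add hnorm2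
  have hTb1 : ∀ a : Ed d × Ed d, ‖T₁ a‖ ≤ ‖a.1‖ + ‖a.2‖ := by
    intro a
    have h0 : (0:ℝ) ≤ 1 - ρ := by linarith [hρ.2.le]
    calc ‖a.1 + (1 - ρ) • a.2‖ ≤ ‖a.1‖ + ‖(1 - ρ) • a.2‖ := norm_add_le _ _
      _ = ‖a.1‖ + |1 - ρ| * ‖a.2‖ := by rw [norm_smul, Real.norm_eq_abs]
      _ ≤ ‖a.1‖ + ‖a.2‖ := by
          rw [abs_of_nonneg h0]
          nlinarith [norm_nonneg a.2, hρ.1]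
  have hTb2 : ∀ a : Ed d × Ed d, ‖T₂ a‖ ≤ ‖a.1‖ + ‖a.2‖ := by
    intro a
    calc ‖a.1 - ρ • a.2‖ ≤ ‖a.1‖ + ‖ρ • a.2‖ := norm_sub_le _ _
      _ = ‖a.1‖ + |ρ| * ‖a.2‖ := by rw [norm_smul, Real.norm_eq_abs]
      _ ≤ ‖a.1‖ + ‖a.2‖ := by
          rw [abs_of_nonneg hρ.1.le]
          nlinarith [norm_nonneg a.2, hρ.2]
  have hI1 : Integrable (fun a : Ed d × Ed d => g a.1 a.2 • T₁ a) σ := by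
    refine Integrable.mono' hdom
      (h1meas.aestronglyMeasurable.smul hT₁.aestronglyMeasurable) ?_
    filter_upwards with a
    rw [norm_smul, Real.norm_eq_abs, abs_of_nonneg (hg0 a)]
    calc g a.1 a.2 * ‖T₁ a‖ ≤ 1 * ‖T₁ a‖ :=
          mul_le_mul_of_nonneg_right (hg_range a.1 a.2).2 (norm_nonneg _)
      _ = ‖T₁ a‖ := one_mul _
      _ ≤ ‖a.1‖ + ‖a.2‖ := hTb1 a
  have hI2 : Integrable (fun a : Ed d × Ed d => (1 - g a.1 a.2) • T₂ a) σ := by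
    refine Integrable.mono' hdom
      (h2meas.aestronglyMeasurable.smul hT₂.aestronglyMeasurable) ?_
    filter_upwards with a
    rw [norm_smul, Real.norm_eq_abs, abs_of_nonneg (hg1 a)]
    calc (1 - g a.1 a.2) * ‖T₂ a‖ ≤ 1 * ‖T₂ a‖ := by
          have := hg0 a
          nlinarith [norm_nonneg (T₂ a)]
      _ = ‖T₂ a‖ := one_mul _
      _ ≤ ‖a.1‖ + ‖a.2‖ := hTb2 a
  have hIfst : Integrable (fun a : Ed d × Ed d => a.1) σ :=
    (integrable_norm_iff measurable_fst.aestronglyMeasurable).mp hnorm1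
  have hI3 : Integrable (fun a : Ed d × Ed d => (g a.1 a.2 - ρ) • a.2) σ := by
    refine Integrable.mono' hnorm2
      ((h1meas.sub measurable_const).aestronglyMeasurable.smul
        measurable_snd.aestronglyMeasurable) ?_
    filter_upwards with a
    rw [norm_smul, Real.norm_eq_abs]
    have h1 := hg_range a.1 a.2
    have : |g a.1 a.2 - ρ| ≤ 1 := by
      rw [abs_le]; constructor <;> [linarith [h1.1, hρ.2.le]; linarith [h1.2, hρ.1.le]]
    nlinarith [norm_nonneg a.2, abs_nonneg (g a.1 a.2 - ρ)]
  -- integrability of identity w.r.t. π, μ₁, μ₂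
  have hidπ : Integrable (fun Λ : Ed d => Λ) π :=
    (integrable_norm_iff measurable_id.aestronglyMeasurable).mp hπmom
  have hidν : Integrable (fun Λ : Ed d => Λ) (μ₁ + μ₂) := hπeq ▸ hidπ
  obtain ⟨hidμ₁, hidμ₂⟩ := integrable_add_measure.mp hidν
  -- compute the mean identity
  have hmean : ∫ Λ, Λ ∂π = ∫ a, g a.1 a.2 • T₁ a ∂σ + ∫ a, (1 - g a.1 a.2) • T₂ a ∂σ := by
    calc ∫ Λ, Λ ∂π = ∫ Λ, Λ ∂(μ₁ + μ₂) := by rw [← hπeq]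
      _ = ∫ Λ, Λ ∂μ₁ + ∫ Λ, Λ ∂μ₂ := integral_add_measure hidμ₁ hidμ₂
      _ = ∫ a, g a.1 a.2 • T₁ a ∂σ + ∫ a, (1 - g a.1 a.2) • T₂ a ∂σ := by
          rw [hμ₁def, hμ₂def,
            int_map_wd σ T₁ hT₁ (fun p => g p.1 p.2) h1meas hg0 (fun Λ => Λ)
              ((hμ₁def ▸ hidμ₁).aestronglyMeasurable),
            int_map_wd σ T₂ hT₂ (fun p => 1 - g p.1 p.2) h2meas hg1 (fun Λ => Λ)
              ((hμ₂def ▸ hidμ₂).aestronglyMeasurable)]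
  have hptwise : ∀ a : Ed d × Ed d,
      g a.1 a.2 • T₁ a + (1 - g a.1 a.2) • T₂ a = a.1 + (g a.1 a.2 - ρ) • a.2 := by
    intro a
    show g a.1 a.2 • (a.1 + (1 - ρ) • a.2) + (1 - g a.1 a.2) • (a.1 - ρ • a.2)
      = a.1 + (g a.1 a.2 - ρ) • a.2
    module
  have hzero : ∫ a, (g a.1 a.2 - ρ) • a.2 ∂σ = 0 := by
    have h1 : ∫ a, (a.1 + (g a.1 a.2 - ρ) • a.2) ∂σ = ∫ Λ, Λ ∂π := by
      rw [← integral_congr_ae (Filter.Eventually.of_forall hptwise),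
        integral_add hI1 hI2, ← hmean]
    have h2 : ∫ a, (a.1 + (g a.1 a.2 - ρ) • a.2) ∂σ
        = (∫ Λ, Λ ∂π) + ∫ a, (g a.1 a.2 - ρ) • a.2 ∂σ := by
      rw [integral_add hIfst hI3]
      congr 1
      rw [hσdef, integral_fun_fst (fun Λ : Ed d => Λ)]
      simp
    have h3 : (∫ Λ, Λ ∂π) + ∫ a, (g a.1 a.2 - ρ) • a.2 ∂σ = ∫ Λ, Λ ∂π :=
      h2.symm.trans h1
    exact add_eq_left.mp h3
  -- Fubini and conclusion
  set r : Ed d → ℝ := fun x => ∫ Λ, g Λ x ∂π with hrdef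
  have hgX : ∀ X : Ed d, Integrable (fun Λ => g Λ X) π := by
    intro X
    refine Integrable.mono' (integrable_const 1)
      ((hg_meas.comp (measurable_id.prodMk measurable_const)).aestronglyMeasurable) ?_
    filter_upwards with Λ
    rw [Real.norm_eq_abs, abs_of_nonneg (hg_range Λ X).1]
    exact (hg_range Λ X).2
  have hswap : ∫ a, (g a.1 a.2 - ρ) • a.2 ∂σ
      = ∫ X, ∫ Λ, (g Λ X - ρ) • X ∂π ∂Γ := integral_prod_symm _ hI3
  have hinner : ∀ X : Ed d, ∫ Λ, (g Λ X - ρ) • X ∂π = (r X - ρ) • X := by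
    intro X
    rw [integral_smul_const, integral_sub (hgX X) (integrable_const ρ), integral_const]
    simp [hrdef]
  have hΦr : ∫ X, (r X - ρ) • X ∂Γ = 0 := by
    calc ∫ X, (r X - ρ) • X ∂Γ = ∫ X, ∫ Λ, (g Λ X - ρ) • X ∂π ∂Γ :=
          integral_congr_ae (Filter.Eventually.of_forall fun X => (hinner X).symm)
      _ = ∫ a, (g a.1 a.2 - ρ) • a.2 ∂σ := hswap.symm
      _ = 0 := hzero
  have hrC : r ∈ C := by
    rw [hC]; exact ⟨π, inferInstance, fun x => rfl⟩
  have hΦc : ∫ X, ((fun _ : Ed d => ρ) X - ρ) • X ∂Γ = 0 := by simp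
  have hfinal : r = fun _ => ρ := hinj r hrC _ hconst (by rw [hΦr, hΦc])
  intro x
  exact congrFun hfinal x
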